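/- Let f(y) = −(1/2)y². For every initial data x₀, y₀, z₀, x₁, y₁, z₁ ∈ ℝ there exist twice continuously differentiable functions x, y, x̃ : ℝ → ℝ defined on all of ℝ with x(0)=x₀, x'(0)=x₁, y(0)=y₀, y'(0)=y₁, x̃(0)=z₀, x̃'(0)=z₁, satisfying the geodesic system x'' = 0, y'' = −f'(y)·(x')² = (x')²·y, x̃'' = 2·f'(y)·x'·y' = −2y·x'·y' on all of ℝ. (Hence the manifold S₋ = M_{f} with f(y)=−(1/2)y² is geodesically complete.) -/

import Mathlib

open Real

/-- Any `C¹` function has a `C²` antiderivative with prescribed value at `0`. -/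
lemma exists_antideriv (g : ℝ → ℝ) (hg : ContDiff ℝ 1 g) (z₀ : ℝ) :
    ∃ F : ℝ → ℝ, ContDiff ℝ 2 F ∧ F 0 = z₀ ∧ ∀ t, deriv F t = g t := by
  refine ⟨fun t => z₀ + ∫ s in (0:ℝ)..t, g s, ?_, by simp, ?_⟩
  · have hd : ∀ t : ℝ, HasDerivAt (fun t => z₀ + ∫ s in (0:ℝ)..t, g s) (g t) t := fun t =>
      ((hg.continuous.integral_hasStrictDerivAt 0 t).hasDerivAt).const_add z₀
    have hderiv : deriv (fun t => z₀ + ∫ s in (0:ℝ)..t, g s) = g :=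
      funext fun t => (hd t).deriv
    rw [show (2 : WithTop ℕ∞) = 1 + 1 from by norm_num, contDiff_succ_iff_deriv]
    refine ⟨fun t => (hd t).differentiableAt, by simp, ?_⟩
    rw [hderiv]; exact hg
  · exact fun t => (((hg.continuous.integral_hasStrictDerivAt 0 t).hasDerivAt).const_add z₀).deriv

theorem Sminus_geodesically_complete (x₀ y₀ z₀ x₁ y₁ z₁ : ℝ) :
    ∃ x y xt : ℝ → ℝ,
      ContDiff ℝ 2 x ∧ ContDiff ℝ 2 y ∧ ContDiff ℝ 2 xt ∧
      x 0 = x₀ ∧ deriv x 0 = x₁ ∧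
      y 0 = y₀ ∧ deriv y 0 = y₁ ∧
      xt 0 = z₀ ∧ deriv xt 0 = z₁ ∧
      (∀ t : ℝ, deriv (deriv x) t = 0) ∧
      (∀ t : ℝ, deriv (deriv y) t = (deriv x t) ^ 2 * y t) ∧
      (∀ t : ℝ, deriv (deriv xt) t = -2 * y t * deriv x t * deriv y t) := by
  by_cases hx₁ : x₁ = 0
  · -- linear solution
    subst hx₁
    refine ⟨fun _ => x₀, fun t => y₀ + y₁ * t, fun t => z₀ + z₁ * t, contDiff_const, ?_, ?_,
      rfl, ?_, by simp, ?_, by simp, ?_, ?_, ?_, ?_⟩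
    · exact contDiff_const.add (contDiff_const.mul contDiff_id)
    · exact contDiff_const.add (contDiff_const.mul contDiff_id)
    · simp
    · simpa using (((hasDerivAt_id (0:ℝ)).const_mul y₁).const_add y₀).deriv
    · simpa using (((hasDerivAt_id (0:ℝ)).const_mul z₁).const_add z₀).deriv
    · intro t; simp
    · intro t
      have h1 : deriv (fun t : ℝ => y₀ + y₁ * t) = fun _ => y₁ := by
        funext s
        simpa using (((hasDerivAt_id s).const_mul y₁).const_add y₀).deriv
      rw [h1]
      simp
    · intro t
      have h1 : deriv (fun t : ℝ => z₀ + z₁ * t) = fun _ => z₁ := by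
        funext s
        simpa using (((hasDerivAt_id s).const_mul z₁).const_add z₀).deriv
      rw [h1]
      simp
  · -- hyperbolic solution
    set a := x₁ with ha
    set x : ℝ → ℝ := fun t => x₀ + a * t with hxdef
    set y : ℝ → ℝ := fun t => y₀ * Real.cosh (a * t) + (y₁ / a) * Real.sinh (a * t) with hydef
    set y' : ℝ → ℝ := fun t => y₀ * a * Real.sinh (a * t) + y₁ * Real.cosh (a * t) with hy'def
    have hinner : ∀ t : ℝ, HasDerivAt (fun t : ℝ => a * t) a t := by
      intro t; simpa using (hasDerivAt_id t).const_mul a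
    have hcosh : ∀ t : ℝ, HasDerivAt (fun t => Real.cosh (a * t)) (Real.sinh (a * t) * a) t :=
      fun t => (Real.hasDerivAt_cosh (a * t)).comp t (hinner t)
    have hsinh : ∀ t : ℝ, HasDerivAt (fun t => Real.sinh (a * t)) (Real.cosh (a * t) * a) t :=
      fun t => (Real.hasDerivAt_sinh (a * t)).comp t (hinner t)
    have hy1 : ∀ t, HasDerivAt y (y' t) t := by
      intro t
      have := ((hcosh t).const_mul y₀).add ((hsinh t).const_mul (y₁ / a))
      refine this.congr_deriv ?_
      simp only [hy'def]
      field_simp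
    have hy2 : ∀ t, HasDerivAt y' (a ^ 2 * y t) t := by
      intro t
      have := ((hsinh t).const_mul (y₀ * a)).add ((hcosh t).const_mul y₁)
      refine this.congr_deriv ?_
      simp only [hydef]
      field_simp
    have hderivy : deriv y = y' := funext fun t => (hy1 t).deriv
    have hderivy' : ∀ t, deriv y' t = a ^ 2 * y t := fun t => (hy2 t).deriv
    have hyC : ContDiff ℝ 2 y := by
      refine (contDiff_const.mul (Real.contDiff_cosh.comp ?_)).add
        (contDiff_const.mul (Real.contDiff_sinh.comp ?_)) <;>
      exact contDiff_const.mul contDiff_id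
    -- the x component
    have hx1 : ∀ t, HasDerivAt x a t := by
      intro t; exact (hinner t).const_add x₀
    have hderivx : deriv x = fun _ => a := funext fun t => (hx1 t).deriv
    -- the xt component
    set g : ℝ → ℝ := fun t => z₁ + a * y₀ ^ 2 - a * y t ^ 2 with hgdef
    have hgC : ContDiff ℝ 1 g :=
      contDiff_const.sub (contDiff_const.mul ((hyC.of_le one_le_two).pow 2))
    have hg1 : ∀ t, HasDerivAt g (-(a * (2 * y t ^ 1 * y' t))) t := by
      intro t
      exact (((hy1 t).pow 2).const_mul a).const_sub (z₁ + a * y₀ ^ 2)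
    obtain ⟨F, hFC, hF0, hFd⟩ := exists_antideriv g hgC z₀
    have hy0 : y 0 = y₀ := by simp [hydef]
    have hy'0 : y' 0 = y₁ := by simp [hy'def]
    refine ⟨x, y, F, ?_, hyC, hFC, by simp [hxdef], ?_, hy0, ?_, hF0, ?_, ?_, ?_, ?_⟩
    · exact contDiff_const.add (contDiff_const.mul contDiff_id)
    · rw [hderivx]
    · rw [hderivy, hy'0]
    · rw [hFd 0, hgdef]; simp [hy0]
    · intro t; rw [hderivx]; simp
    · intro t; rw [hderivy, hderivx, hderivy' t]
    · intro t
      have : deriv F = g := funext hFd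
      rw [this, hderivy, hderivx, (hg1 t).deriv]
      ring
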